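/- arXiv:1712.07513 — 4 statements merged into one kernel-verified Lean document; each statement's English description precedes it below -/
import Mathlib

section
/- Let g₀ be a continuous and strictly increasing function with domain [c,d] (c<d) and range [a,b] (a<b) such that [a,b]∩[c,d] contains a non-empty open interval, and g₀(t)=t for some t∈[a,b]∩[c,d]. If there exist an interval [α,β]⊆[a,b]∩[c,d] and a pair of continuous, strictly increasing surjections g₁:[a,b]→[α,β] and g₂:[c,d]→[α,β] such that for all t∈[a,b]∩[c,d] one has (a) g₀(t)=g₁⁻¹(g₂(t)) and (b) (g₁(t)+g₂(t))/2 = t, then this pair (g₁,g₂) is unique: any other pair of continuous strictly increasing surjections onto some interval contained in [a,b]∩[c,d] satisfying (a) and (b) coincides with (g₁,g₂) on [a,b]∩[c,d]. -/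
lemma D_zero_of_orbit (D φ : ℝ → ℝ) (p q : ℝ) (hpq : p ≤ q)
    (hDcont : ContinuousOn D (Set.Icc p q))
    (hφp : φ p = p) (hφq : φ q ≤ q)
    (hmono : ∀ x ∈ Set.Icc p q, ∀ y ∈ Set.Icc p q, x ≤ y → φ x ≤ φ y)
    (hflip : ∀ x ∈ Set.Icc p q, D (φ x) = - D x) :
    D q = 0 := by
  set u : ℕ → ℝ := fun n => φ^[n] q with hu
  have hsucc : ∀ n, u (n+1) = φ (u n) := by
    intro n; simp [hu, Function.iterate_succ_apply']
  have key : ∀ n, u n ∈ Set.Icc p q ∧ u (n+1) ≤ u n := by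
    intro n
    induction n with
    | zero =>
      refine ⟨⟨hpq, le_refl q⟩, ?_⟩
      rw [hsucc]; simpa [hu] using hφq
    | succ n ih =>
      obtain ⟨hn, hle⟩ := ih
      have hn1 : u (n+1) ∈ Set.Icc p q := by
        constructor
        · have := hmono p ⟨le_refl p, hpq⟩ (u n) hn hn.1
          rw [hφp] at this
          rw [hsucc]; exact this
        · exact le_trans hle hn.2
      refine ⟨hn1, ?_⟩
      have h2 := hmono (u (n+1)) hn1 (u n) hn hle
      rw [← hsucc n] at h2
      rw [hsucc (n+1)]; exact h2
  have hmem : ∀ n, u n ∈ Set.Icc p q := fun n => (key n).1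
  have hanti : Antitone u := antitone_nat_of_succ_le (fun n => (key n).2)
  have hbdd : BddBelow (Set.range u) := ⟨p, by rintro x ⟨n, rfl⟩; exact (hmem n).1⟩
  have hlim : Filter.Tendsto u Filter.atTop (nhds (⨅ n, u n)) :=
    tendsto_atTop_ciInf hanti hbdd
  set L := ⨅ n, u n with hL
  have hLmem : L ∈ Set.Icc p q := by
    constructor
    · exact le_ciInf fun n => (hmem n).1
    · exact le_trans (ciInf_le hbdd 0) (hmem 0).2
  have hDn : ∀ n, D (u n) = (-1 : ℝ)^n * D q := by
    intro n; induction n with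
    | zero => simp [hu]
    | succ n ih =>
      have h1 : D (u (n+1)) = - D (u n) := by
        rw [hsucc]; exact hflip (u n) (hmem n)
      rw [h1, ih]; ring
  have hDu : Filter.Tendsto (fun n => D (u n)) Filter.atTop (nhds (D L)) := by
    have hcw : Filter.Tendsto D (nhdsWithin L (Set.Icc p q)) (nhds (D L)) := hDcont L hLmem
    exact hcw.comp (tendsto_nhdsWithin_of_tendsto_nhds_of_eventually_within u hlim
      (Filter.Eventually.of_forall hmem))
  have h2t : Filter.Tendsto (fun n : ℕ => 2*n) Filter.atTop Filter.atTop :=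
    Filter.tendsto_atTop_mono (fun n => by simp only [id_eq]; omega) Filter.tendsto_id
  have h2t' : Filter.Tendsto (fun n : ℕ => 2*n+1) Filter.atTop Filter.atTop :=
    Filter.tendsto_atTop_mono (fun n => by simp only [id_eq]; omega) Filter.tendsto_id
  have heven : Filter.Tendsto (fun n => D (u (2*n))) Filter.atTop (nhds (D L)) := hDu.comp h2t
  have hodd : Filter.Tendsto (fun n => D (u (2*n+1))) Filter.atTop (nhds (D L)) := hDu.comp h2t'
  have he : (fun n => D (u (2*n))) = fun _ => D q := by
    funext n; rw [hDn]; simp [pow_mul]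
  have ho : (fun n => D (u (2*n+1))) = fun _ => - D q := by
    funext n; rw [hDn]; simp [pow_succ, pow_mul]
  rw [he] at heven; rw [ho] at hodd
  have h1 : D q = D L := tendsto_nhds_unique tendsto_const_nhds heven
  have h2 : - D q = D L := tendsto_nhds_unique tendsto_const_nhds hodd
  linarith

lemma D_zero_of_orbit' (D φ : ℝ → ℝ) (p q : ℝ) (hpq : p ≤ q)
    (hDcont : ContinuousOn D (Set.Icc p q))
    (hφq : φ q = q) (hφp : p ≤ φ p)
    (hmono : ∀ x ∈ Set.Icc p q, ∀ y ∈ Set.Icc p q, x ≤ y → φ x ≤ φ y)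
    (hflip : ∀ x ∈ Set.Icc p q, D (φ x) = - D x) :
    D p = 0 := by
  have hmem : ∀ x : ℝ, x ∈ Set.Icc (-q) (-p) → -x ∈ Set.Icc p q := by
    intro x hx; simp only [Set.mem_Icc] at hx ⊢; constructor <;> linarith
  have h := D_zero_of_orbit (fun x => D (-x)) (fun x => - φ (-x)) (-q) (-p)
    (by linarith)
    (hDcont.comp continuous_neg.continuousOn (fun x hx => hmem x hx))
    (by simpa using congrArg Neg.neg hφq)
    (by simpa using hφp)
    (by intro x hx y hy hxy
        have h2 := hmono (-y) (hmem y hy) (-x) (hmem x hx) (by linarith)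
        linarith)
    (by intro x hx
        simpa using hflip (-x) (hmem x hx))
  simpa using h

/-- Theorem 1, uniqueness: Let `g₀` be a continuous strictly increasing
function from `[c,d]` onto `[a,b]` such that `[a,b] ∩ [c,d]` contains a non-empty open
interval and `g₀` has a fixed point in `[a,b] ∩ [c,d]`.  If there are `[α,β] ⊆ [a,b] ∩ [c,d]`
and continuous, strictly increasing surjections `g₁ : [a,b] → [α,β]`, `g₂ : [c,d] → [α,β]`
with (a) `g₀(t) = g₁⁻¹(g₂(t))` and (b) `(g₁(t)+g₂(t))/2 = t` on `[a,b] ∩ [c,d]`, then the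
pair `(g₁,g₂)` is unique: any other such pair (with its own interval `[α',β']` contained in
`[a,b] ∩ [c,d]`) coincides with `(g₁,g₂)` on `[a,b] ∩ [c,d]`. -/
theorem warping_pair_unique (a b c d α β : ℝ) (hab : a < b) (hcd : c < d)
    (g₀ g₁ g₂ g₁inv : ℝ → ℝ)
    (hg₀cont : ContinuousOn g₀ (Set.Icc c d))
    (hg₀mono : StrictMonoOn g₀ (Set.Icc c d))
    (hg₀range : g₀ '' Set.Icc c d = Set.Icc a b)
    (hopen : ∃ u v : ℝ, u < v ∧ Set.Ioo u v ⊆ Set.Icc a b ∩ Set.Icc c d)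
    (hfix : ∃ t ∈ Set.Icc a b ∩ Set.Icc c d, g₀ t = t)
    (hαβ : Set.Icc α β ⊆ Set.Icc a b ∩ Set.Icc c d)
    (hg₁cont : ContinuousOn g₁ (Set.Icc a b))
    (hg₁mono : StrictMonoOn g₁ (Set.Icc a b))
    (hg₁surj : g₁ '' Set.Icc a b = Set.Icc α β)
    (hg₂cont : ContinuousOn g₂ (Set.Icc c d))
    (hg₂mono : StrictMonoOn g₂ (Set.Icc c d))
    (hg₂surj : g₂ '' Set.Icc c d = Set.Icc α β)
    (hg₁inv_left : ∀ x ∈ Set.Icc a b, g₁inv (g₁ x) = x)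
    (hg₁inv_right : ∀ y ∈ Set.Icc α β, g₁ (g₁inv y) = y)
    (hcond_a : ∀ t ∈ Set.Icc a b ∩ Set.Icc c d, g₀ t = g₁inv (g₂ t))
    (hcond_b : ∀ t ∈ Set.Icc a b ∩ Set.Icc c d, (g₁ t + g₂ t) / 2 = t) :
    ∀ (α' β' : ℝ) (G₁ G₂ G₁inv : ℝ → ℝ),
      Set.Icc α' β' ⊆ Set.Icc a b ∩ Set.Icc c d →
      ContinuousOn G₁ (Set.Icc a b) → StrictMonoOn G₁ (Set.Icc a b) →
      G₁ '' Set.Icc a b = Set.Icc α' β' →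
      ContinuousOn G₂ (Set.Icc c d) → StrictMonoOn G₂ (Set.Icc c d) →
      G₂ '' Set.Icc c d = Set.Icc α' β' →
      (∀ x ∈ Set.Icc a b, G₁inv (G₁ x) = x) →
      (∀ y ∈ Set.Icc α' β', G₁ (G₁inv y) = y) →
      (∀ t ∈ Set.Icc a b ∩ Set.Icc c d, g₀ t = G₁inv (G₂ t)) →
      (∀ t ∈ Set.Icc a b ∩ Set.Icc c d, (G₁ t + G₂ t) / 2 = t) →
      ∀ t ∈ Set.Icc a b ∩ Set.Icc c d, G₁ t = g₁ t ∧ G₂ t = g₂ t := by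
  intro α' β' G₁ G₂ G₁inv hα'β' hG₁cont hG₁mono hG₁surj hG₂cont hG₂mono hG₂surj
    hG₁inv_left hG₁inv_right hcond_a' hcond_b' t ht
  set S := Set.Icc a b ∩ Set.Icc c d with hSdef
  have hSab : S ⊆ Set.Icc a b := Set.inter_subset_left
  have hScd : S ⊆ Set.Icc c d := Set.inter_subset_right
  set D : ℝ → ℝ := fun x => G₁ x - g₁ x with hD
  have hDcont : ContinuousOn D (Set.Icc a b) := hG₁cont.sub hg₁cont
  -- the flip relation on S
  have hflipS : ∀ s ∈ S, D (g₀ s) = - D s := by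
    intro s hs
    have hscd := hScd hs
    have h1 : g₁ (g₀ s) = g₂ s := by
      rw [hcond_a s hs]
      exact hg₁inv_right _ (by rw [← hg₂surj]; exact Set.mem_image_of_mem g₂ hscd)
    have h2 : G₁ (g₀ s) = G₂ s := by
      rw [hcond_a' s hs]
      exact hG₁inv_right _ (by rw [← hG₂surj]; exact Set.mem_image_of_mem G₂ hscd)
    have h3 := hcond_b s hs
    have h4 := hcond_b' s hs
    simp only [hD, h1, h2]
    linarith
  obtain ⟨t₀, ht₀S, ht₀fix⟩ := hfix
  have hIccS : ∀ p q : ℝ, p ∈ S → q ∈ S → Set.Icc p q ⊆ S := by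
    intro p q hp hq x hx
    exact ⟨⟨le_trans (hSab hp).1 hx.1, le_trans hx.2 (hSab hq).2⟩,
           ⟨le_trans (hScd hp).1 hx.1, le_trans hx.2 (hScd hq).2⟩⟩
  -- the inverse of g₀
  set φ : ℝ → ℝ := Function.invFunOn g₀ (Set.Icc c d) with hφdef
  have hinv : ∀ x ∈ Set.Icc a b, g₀ (φ x) = x ∧ φ x ∈ Set.Icc c d := by
    intro x hx
    have hx' : x ∈ g₀ '' Set.Icc c d := by rw [hg₀range]; exact hx
    obtain ⟨r, hr, hrx⟩ := hx'
    exact ⟨Function.invFunOn_eq ⟨r, hr, hrx⟩, Function.invFunOn_mem ⟨r, hr, hrx⟩⟩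
  have hDt : D t = 0 := by
    rcases le_total t₀ t with hle | hle
    · have hsub : Set.Icc t₀ t ⊆ S := hIccS t₀ t ht₀S ht
      have hsubcd : ∀ x ∈ Set.Icc t₀ t, x ∈ Set.Icc c d := fun x hx => hScd (hsub hx)
      have hsubab : ∀ x ∈ Set.Icc t₀ t, x ∈ Set.Icc a b := fun x hx => hSab (hsub hx)
      rcases le_total (g₀ t) t with hg | hg
      · exact D_zero_of_orbit D g₀ t₀ t hle (hDcont.mono hsubab) ht₀fix hg
          (fun x hx y hy hxy => hg₀mono.monotoneOn (hsubcd x hx) (hsubcd y hy) hxy)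
          (fun x hx => hflipS x (hsub hx))
      · have hkey : ∀ x ∈ Set.Icc t₀ t, φ x ∈ Set.Icc t₀ t := by
          intro x hx
          have h := hinv x (hsubab x hx)
          constructor
          · have h1 : g₀ t₀ ≤ g₀ (φ x) := by rw [ht₀fix, h.1]; exact hx.1
            exact (hg₀mono.le_iff_le (hScd ht₀S) h.2).mp h1
          · have h1 : g₀ (φ x) ≤ g₀ t := by rw [h.1]; exact le_trans hx.2 hg
            exact (hg₀mono.le_iff_le h.2 (hScd ht)).mp h1
        apply D_zero_of_orbit D φ t₀ t hle (hDcont.mono hsubab)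
        · have h := hinv t₀ (hSab ht₀S)
          exact hg₀mono.injOn h.2 (hScd ht₀S) (by rw [h.1, ht₀fix])
        · have h := hinv t (hSab ht)
          exact (hg₀mono.le_iff_le h.2 (hScd ht)).mp (by rw [h.1]; exact hg)
        · intro x hx y hy hxy
          have hx' := hinv x (hsubab x hx); have hy' := hinv y (hsubab y hy)
          exact (hg₀mono.le_iff_le hx'.2 hy'.2).mp (by rw [hx'.1, hy'.1]; exact hxy)
        · intro x hx
          have hφx := hkey x hx
          have h := hflipS (φ x) (hsub hφx)
          rw [(hinv x (hsubab x hx)).1] at h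
          linarith
    · have hsub : Set.Icc t t₀ ⊆ S := hIccS t t₀ ht ht₀S
      have hsubcd : ∀ x ∈ Set.Icc t t₀, x ∈ Set.Icc c d := fun x hx => hScd (hsub hx)
      have hsubab : ∀ x ∈ Set.Icc t t₀, x ∈ Set.Icc a b := fun x hx => hSab (hsub hx)
      rcases le_total t (g₀ t) with hg | hg
      · exact D_zero_of_orbit' D g₀ t t₀ hle (hDcont.mono hsubab) ht₀fix hg
          (fun x hx y hy hxy => hg₀mono.monotoneOn (hsubcd x hx) (hsubcd y hy) hxy)
          (fun x hx => hflipS x (hsub hx))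
      · have hkey : ∀ x ∈ Set.Icc t t₀, φ x ∈ Set.Icc t t₀ := by
          intro x hx
          have h := hinv x (hsubab x hx)
          constructor
          · have h1 : g₀ t ≤ g₀ (φ x) := by rw [h.1]; exact le_trans hg hx.1
            exact (hg₀mono.le_iff_le (hScd ht) h.2).mp h1
          · have h1 : g₀ (φ x) ≤ g₀ t₀ := by rw [ht₀fix, h.1]; exact hx.2
            exact (hg₀mono.le_iff_le h.2 (hScd ht₀S)).mp h1
        apply D_zero_of_orbit' D φ t t₀ hle (hDcont.mono hsubab)
        · have h := hinv t₀ (hSab ht₀S)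
          exact hg₀mono.injOn h.2 (hScd ht₀S) (by rw [h.1, ht₀fix])
        · have h := hinv t (hSab ht)
          exact (hg₀mono.le_iff_le (hScd ht) h.2).mp (by rw [h.1]; exact hg)
        · intro x hx y hy hxy
          have hx' := hinv x (hsubab x hx); have hy' := hinv y (hsubab y hy)
          exact (hg₀mono.le_iff_le hx'.2 hy'.2).mp (by rw [hx'.1, hy'.1]; exact hxy)
        · intro x hx
          have hφx := hkey x hx
          have h := hflipS (φ x) (hsub hφx)
          rw [(hinv x (hsubab x hx)).1] at h
          linarith
  have hG1 : G₁ t = g₁ t := by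
    have h := hDt; simp only [hD] at h; linarith
  refine ⟨hG1, ?_⟩
  have h3 := hcond_b t ht
  have h4 := hcond_b' t ht
  linarith
end

section
/- Fix t₀∈(0,1) and r>0 with r≠1 and r(1−t₀)<1, and define g₀:[0,1]→[0,1] by g₀(t) = ((1−r(1−t₀))/t₀)·t for t∈[0,t₀) and g₀(t) = 1−r(1−t) for t∈[t₀,1]. Then there is no pair of continuous and strictly increasing functions g₁:[0,1]→[0,1] and g₂:[0,1]→[0,1] such that g₀(t)=g₁⁻¹(g₂(t)) and (g₁(t)+g₂(t))/2 = t hold for all t∈[0,1]. -/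
private lemma seq_limit_lemma (ρ δ c : ℝ) (hρ0 : 0 < ρ) (hρ1 : ρ < 1) (hδ : 0 < δ)
    (D : ℕ → ℝ) (hpos : ∀ n, 0 < D n) (hub : ∀ n, D n < 2 * ρ ^ n * δ)
    (hrec : ∀ n, D (n + 1) = c * ρ ^ n * δ - D n) :
    D 0 = c / (1 + ρ) * δ := by
  set κ := c / (1 + ρ) with hκ
  have h1ρ : (0:ℝ) < 1 + ρ := by linarith
  have hcκ : c = κ * (1 + ρ) := by
    rw [hκ, div_mul_cancel₀ c h1ρ.ne']
  have hkey : ∀ n, D n - κ * ρ ^ n * δ = (-1 : ℝ) ^ n * (D 0 - κ * δ) := by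
    intro n
    induction n with
    | zero => simp
    | succ n ih =>
      rw [hrec n]
      linear_combination -ih + ρ ^ n * δ * hcκ
  have hbound : ∀ n, |D 0 - κ * δ| ≤ (2 + |κ|) * ρ ^ n * δ := by
    intro n
    have h := hkey n
    have h1 : |D n - κ * ρ ^ n * δ| = |D 0 - κ * δ| := by
      rw [h, abs_mul, abs_pow, abs_neg, abs_one, one_pow, one_mul]
    rw [← h1]
    have hpn : (0:ℝ) < ρ ^ n := pow_pos hρ0 n
    have h2 := hpos n
    have h3 := hub n
    have h4 : -|κ| ≤ κ := neg_abs_le κ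
    have h5 : κ ≤ |κ| := le_abs_self κ
    rw [abs_le]
    constructor
    · nlinarith
    · nlinarith
  by_contra hne
  have hE : 0 < |D 0 - κ * δ| := abs_pos.mpr (sub_ne_zero.mpr hne)
  have hM : 0 < (2 + |κ|) * δ := by
    have := abs_nonneg κ; nlinarith
  obtain ⟨n, hn⟩ := exists_pow_lt_of_lt_one
    (show 0 < |D 0 - κ * δ| / ((2 + |κ|) * δ) from div_pos hE hM) hρ1
  have := hbound n
  have hpn : (0:ℝ) < ρ ^ n := pow_pos hρ0 n
  rw [lt_div_iff₀ hM] at hn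
  nlinarith

private lemma mem_aux (lo hi F ρ : ℝ) (hF1 : lo ≤ F) (hF2 : F ≤ hi)
    (hρ0 : 0 < ρ) (hρ1 : ρ < 1) (n : ℕ) (x : ℝ) (hx1 : lo ≤ x) (hx2 : x ≤ hi) :
    lo ≤ F + ρ ^ n * (x - F) ∧ F + ρ ^ n * (x - F) ≤ hi := by
  have h1 : (0:ℝ) ≤ ρ ^ n := (pow_pos hρ0 n).le
  have h2 : ρ ^ n ≤ 1 := pow_le_one₀ hρ0.le hρ1.le
  constructor
  · nlinarith [mul_nonneg (sub_nonneg.mpr h2) (sub_nonneg.mpr hF1),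
      mul_nonneg h1 (sub_nonneg.mpr hx1)]
  · nlinarith [mul_nonneg (sub_nonneg.mpr h2) (sub_nonneg.mpr hF2),
      mul_nonneg h1 (sub_nonneg.mpr hx2)]

private lemma slope_fwd (g : ℝ → ℝ) (lo hi F ρ : ℝ) (hρ0 : 0 < ρ) (hρ1 : ρ < 1)
    (hF1 : lo ≤ F) (hF2 : F ≤ hi)
    (hincr : ∀ x y, lo ≤ x → x < y → y ≤ hi → 0 < g y - g x ∧ g y - g x < 2 * (y - x))
    (hfun : ∀ x, lo ≤ x → x ≤ hi → g (F + ρ * (x - F)) = 2 * x - g x)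
    (s t : ℝ) (hs : lo ≤ s) (hst : s < t) (ht : t ≤ hi) :
    g t - g s = 2 / (1 + ρ) * (t - s) := by
  have hδ : 0 < t - s := sub_pos.mpr hst
  set D : ℕ → ℝ := fun n => g (F + ρ ^ n * (t - F)) - g (F + ρ ^ n * (s - F)) with hD
  have hs' : s ≤ hi := hst.le.trans ht
  have ht' : lo ≤ t := hs.trans hst.le
  have hmem_s := fun n => mem_aux lo hi F ρ hF1 hF2 hρ0 hρ1 n s hs hs'
  have hmem_t := fun n => mem_aux lo hi F ρ hF1 hF2 hρ0 hρ1 n t ht' ht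
  have hlt : ∀ n : ℕ, F + ρ ^ n * (s - F) < F + ρ ^ n * (t - F) := by
    intro n
    have := pow_pos hρ0 n
    nlinarith
  have hDincr : ∀ n, 0 < D n ∧ D n < 2 * ρ ^ n * (t - s) := by
    intro n
    have h := hincr _ _ (hmem_s n).1 (hlt n) (hmem_t n).2
    constructor
    · exact h.1
    · have := h.2
      calc D n < 2 * ((F + ρ ^ n * (t - F)) - (F + ρ ^ n * (s - F))) := this
        _ = 2 * ρ ^ n * (t - s) := by ring
  have hrec : ∀ n, D (n + 1) = 2 * ρ ^ n * (t - s) - D n := by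
    intro n
    have h1 := hfun (F + ρ ^ n * (t - F)) (hmem_t n).1 (hmem_t n).2
    have h2 := hfun (F + ρ ^ n * (s - F)) (hmem_s n).1 (hmem_s n).2
    have e1 : F + ρ * (F + ρ ^ n * (t - F) - F) = F + ρ ^ (n+1) * (t - F) := by ring
    have e2 : F + ρ * (F + ρ ^ n * (s - F) - F) = F + ρ ^ (n+1) * (s - F) := by ring
    rw [e1] at h1; rw [e2] at h2
    simp only [hD]
    rw [h1, h2]; ring
  have := seq_limit_lemma ρ (t - s) 2 hρ0 hρ1 hδ D (fun n => (hDincr n).1)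
    (fun n => (hDincr n).2) hrec
  have hD0 : D 0 = g t - g s := by simp [hD]
  rw [hD0] at this
  linarith [this]

private lemma slope_bwd (g : ℝ → ℝ) (lo hi F ρ : ℝ) (hρ0 : 0 < ρ) (hρ1 : ρ < 1)
    (hF1 : lo ≤ F) (hF2 : F ≤ hi)
    (hincr : ∀ x y, lo ≤ x → x < y → y ≤ hi → 0 < g y - g x ∧ g y - g x < 2 * (y - x))
    (hfun : ∀ x, lo ≤ x → x ≤ hi → g x = 2 * (F + ρ * (x - F)) - g (F + ρ * (x - F)))
    (s t : ℝ) (hs : lo ≤ s) (hst : s < t) (ht : t ≤ hi) :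
    g t - g s = 2 * ρ / (1 + ρ) * (t - s) := by
  have hδ : 0 < t - s := sub_pos.mpr hst
  set D : ℕ → ℝ := fun n => g (F + ρ ^ n * (t - F)) - g (F + ρ ^ n * (s - F)) with hD
  have hs' : s ≤ hi := hst.le.trans ht
  have ht' : lo ≤ t := hs.trans hst.le
  have hmem_s := fun n => mem_aux lo hi F ρ hF1 hF2 hρ0 hρ1 n s hs hs'
  have hmem_t := fun n => mem_aux lo hi F ρ hF1 hF2 hρ0 hρ1 n t ht' ht
  have hlt : ∀ n : ℕ, F + ρ ^ n * (s - F) < F + ρ ^ n * (t - F) := by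
    intro n
    have := pow_pos hρ0 n
    nlinarith
  have hDincr : ∀ n, 0 < D n ∧ D n < 2 * ρ ^ n * (t - s) := by
    intro n
    have h := hincr _ _ (hmem_s n).1 (hlt n) (hmem_t n).2
    refine ⟨h.1, ?_⟩
    calc D n < 2 * ((F + ρ ^ n * (t - F)) - (F + ρ ^ n * (s - F))) := h.2
      _ = 2 * ρ ^ n * (t - s) := by ring
  have hrec : ∀ n, D (n + 1) = 2 * ρ * ρ ^ n * (t - s) - D n := by
    intro n
    have h1 := hfun (F + ρ ^ n * (t - F)) (hmem_t n).1 (hmem_t n).2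
    have h2 := hfun (F + ρ ^ n * (s - F)) (hmem_s n).1 (hmem_s n).2
    have e1 : F + ρ * (F + ρ ^ n * (t - F) - F) = F + ρ ^ (n+1) * (t - F) := by ring
    have e2 : F + ρ * (F + ρ ^ n * (s - F) - F) = F + ρ ^ (n+1) * (s - F) := by ring
    rw [e1] at h1; rw [e2] at h2
    simp only [hD]
    rw [pow_succ] at *
    linarith [h1, h2]
  have := seq_limit_lemma ρ (t - s) (2 * ρ) hρ0 hρ1 hδ D (fun n => (hDincr n).1)
    (fun n => (hDincr n).2) hrec
  have hD0 : D 0 = g t - g s := by simp [hD]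
  rw [hD0] at this
  linarith [this]

/-- Theorem 2, non-existence: Fix `t₀ ∈ (0,1)` and `r > 0` with `r ≠ 1`
and `r(1−t₀) < 1`, and define `g₀ : [0,1] → [0,1]` by
`g₀(t) = ((1−r(1−t₀))/t₀)·t` for `t ∈ [0,t₀)` and `g₀(t) = 1 − r(1−t)` for `t ∈ [t₀,1]`.
Then there is no pair of continuous, strictly increasing functions
`g₁, g₂ : [0,1] → [0,1]` with `g₀(t) = g₁⁻¹(g₂(t))` (equivalently, `g₁(g₀(t)) = g₂(t)`,
since `g₁` is injective) and `(g₁(t)+g₂(t))/2 = t` for all `t ∈ [0,1]`. -/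
theorem no_symmetric_pair (t₀ r : ℝ) (ht₀ : t₀ ∈ Set.Ioo (0 : ℝ) 1) (hr : 0 < r)
    (hr1 : r ≠ 1) (hrt : r * (1 - t₀) < 1) :
    ¬ ∃ g₁ g₂ : ℝ → ℝ,
        ContinuousOn g₁ (Set.Icc 0 1) ∧ StrictMonoOn g₁ (Set.Icc 0 1) ∧
        Set.MapsTo g₁ (Set.Icc 0 1) (Set.Icc 0 1) ∧
        ContinuousOn g₂ (Set.Icc 0 1) ∧ StrictMonoOn g₂ (Set.Icc 0 1) ∧
        Set.MapsTo g₂ (Set.Icc 0 1) (Set.Icc 0 1) ∧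
        (∀ t ∈ Set.Icc (0 : ℝ) 1,
          g₁ (if t < t₀ then (1 - r * (1 - t₀)) / t₀ * t else 1 - r * (1 - t)) = g₂ t) ∧
        (∀ t ∈ Set.Icc (0 : ℝ) 1, (g₁ t + g₂ t) / 2 = t) := by
  rintro ⟨g₁, g₂, _, h1m, _, _, h2m, _, hrel, havg⟩
  obtain ⟨ht₀0, ht₀1⟩ := ht₀
  set a : ℝ := (1 - r * (1 - t₀)) / t₀ with ha_def
  have hnum : 0 < 1 - r * (1 - t₀) := by linarith
  have ha0 : 0 < a := div_pos hnum ht₀0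
  have hat₀ : a * t₀ = 1 - r * (1 - t₀) := by
    rw [ha_def, div_mul_cancel₀ _ ht₀0.ne']
  -- g₂ in terms of g₁
  have hg₂ : ∀ t, 0 ≤ t → t ≤ 1 → g₂ t = 2 * t - g₁ t := by
    intro t h0 h1
    have := havg t ⟨h0, h1⟩
    linarith
  -- the two branch relations
  have keyL : ∀ t, 0 ≤ t → t ≤ t₀ → g₁ (a * t) = 2 * t - g₁ t := by
    intro t h0 h1
    have htmem : t ∈ Set.Icc (0:ℝ) 1 := ⟨h0, h1.trans ht₀1.le⟩
    have h3 := hrel t htmem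
    rcases lt_or_eq_of_le h1 with h | h
    · rw [if_pos h] at h3
      rw [show a * t = (1 - r * (1 - t₀)) / t₀ * t from by rw [ha_def], h3]
      exact hg₂ t h0 htmem.2
    · rw [if_neg (by rw [h]; exact lt_irrefl _)] at h3
      rw [show a * t = 1 - r * (1 - t) from by rw [h, hat₀], h3]
      exact hg₂ t h0 htmem.2
  have keyR : ∀ t, t₀ ≤ t → t ≤ 1 → g₁ (1 - r * (1 - t)) = 2 * t - g₁ t := by
    intro t h0 h1
    have htmem : t ∈ Set.Icc (0:ℝ) 1 := ⟨ht₀0.le.trans h0, h1⟩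
    have h3 := hrel t htmem
    rw [if_neg (not_lt.mpr h0)] at h3
    rw [h3]
    exact hg₂ t htmem.1 h1
  -- increment bounds
  have hincr : ∀ x y, (0:ℝ) ≤ x → x < y → y ≤ 1 →
      0 < g₁ y - g₁ x ∧ g₁ y - g₁ x < 2 * (y - x) := by
    intro x y hx hxy hy
    have hxm : x ∈ Set.Icc (0:ℝ) 1 := ⟨hx, (hxy.trans_le hy).le⟩
    have hym : y ∈ Set.Icc (0:ℝ) 1 := ⟨hx.trans hxy.le, hy⟩
    have h1 := h1m hxm hym hxy
    have h2 := h2m hxm hym hxy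
    rw [hg₂ x hxm.1 hxm.2, hg₂ y hym.1 hym.2] at h2
    exact ⟨by linarith, by linarith⟩
  have hincrR : ∀ x y, t₀ ≤ x → x < y → y ≤ 1 →
      0 < g₁ y - g₁ x ∧ g₁ y - g₁ x < 2 * (y - x) :=
    fun x y hx hxy hy => hincr x y (ht₀0.le.trans hx) hxy hy
  have hincrL : ∀ x y, (0:ℝ) ≤ x → x < y → y ≤ t₀ →
      0 < g₁ y - g₁ x ∧ g₁ y - g₁ x < 2 * (y - x) :=
    fun x y hx hxy hy => hincr x y hx hxy (hy.trans ht₀1.le)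
  -- slope on the right piece
  have hr1' : (0:ℝ) < 1 + r := by linarith
  have slopeR : g₁ 1 - g₁ t₀ = 2 / (1 + r) * (1 - t₀) := by
    rcases lt_or_gt_of_ne hr1 with h | h
    · -- r < 1 : forward, F = 1, ρ = r
      have := slope_fwd g₁ t₀ 1 1 r hr h ht₀1.le le_rfl hincrR
        (fun x hx1 hx2 => by
          have := keyR x hx1 hx2
          rw [show (1:ℝ) + r * (x - 1) = 1 - r * (1 - x) from by ring]
          exact this)
        t₀ 1 le_rfl ht₀1 le_rfl
      exact this
    · -- r > 1 : backward, ρ = r⁻¹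
      have hρ0 : (0:ℝ) < r⁻¹ := inv_pos.mpr hr
      have hρ1 : r⁻¹ < 1 := by
        rw [inv_lt_one_iff₀]; right; exact h
      have hres := slope_bwd g₁ t₀ 1 1 r⁻¹ hρ0 hρ1 ht₀1.le le_rfl hincrR
        (fun x hx1 hx2 => by
          have hT1 : t₀ ≤ 1 + r⁻¹ * (x - 1) := by nlinarith
          have hT2 : 1 + r⁻¹ * (x - 1) ≤ 1 := by nlinarith
          have := keyR (1 + r⁻¹ * (x - 1)) hT1 hT2
          rw [show 1 - r * (1 - (1 + r⁻¹ * (x - 1))) = x from by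
            field_simp; ring] at this
          linarith [this])
        t₀ 1 le_rfl ht₀1 le_rfl
      rw [hres]
      congr 1
      field_simp
      ring
  -- slope on the left piece
  have ha1 : a ≠ 1 := by
    intro h
    rw [h, one_mul] at hat₀
    have : r * (1 - t₀) = 1 - t₀ := by linarith
    have ht1 : (1:ℝ) - t₀ ≠ 0 := by linarith
    have h2 : r * (1 - t₀) = 1 * (1 - t₀) := by linarith
    exact hr1 (mul_right_cancel₀ ht1 h2)
  have ha1' : (0:ℝ) < 1 + a := by linarith
  have slopeL : g₁ t₀ - g₁ 0 = 2 / (1 + a) * (t₀ - 0) := by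
    rcases lt_or_gt_of_ne ha1 with h | h
    · -- a < 1 : forward, F = 0, ρ = a
      exact slope_fwd g₁ 0 t₀ 0 a ha0 h le_rfl ht₀0.le hincrL
        (fun x hx1 hx2 => by
          have := keyL x hx1 hx2
          rw [show (0:ℝ) + a * (x - 0) = a * x from by ring]
          exact this)
        0 t₀ le_rfl ht₀0 le_rfl
    · -- a > 1 : backward, ρ = a⁻¹
      have hρ0 : (0:ℝ) < a⁻¹ := inv_pos.mpr ha0
      have hρ1 : a⁻¹ < 1 := by rw [inv_lt_one_iff₀]; right; exact h
      have hres := slope_bwd g₁ 0 t₀ 0 a⁻¹ hρ0 hρ1 le_rfl ht₀0.le hincrL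
        (fun x hx1 hx2 => by
          have hT1 : (0:ℝ) ≤ 0 + a⁻¹ * (x - 0) := by
            have := inv_pos.mpr ha0
            nlinarith
          have hT2 : 0 + a⁻¹ * (x - 0) ≤ t₀ := by
            rw [zero_add, sub_zero]
            calc a⁻¹ * x ≤ 1 * x := by nlinarith
              _ = x := one_mul x
              _ ≤ t₀ := hx2
          have := keyL (0 + a⁻¹ * (x - 0)) hT1 hT2
          rw [show a * (0 + a⁻¹ * (x - 0)) = x from by field_simp; ring] at this
          linarith [this])
        0 t₀ le_rfl ht₀0 le_rfl
      rw [hres]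
      congr 1
      field_simp
      ring
  -- endpoint values
  have g10 : g₁ 0 = 0 := by
    have := keyL 0 le_rfl ht₀0.le
    rw [mul_zero] at this
    linarith
  have g11 : g₁ 1 = 1 := by
    have := keyR 1 ht₀1.le le_rfl
    rw [show (1:ℝ) - r * (1 - 1) = 1 from by ring] at this
    linarith
  rw [g10, sub_zero, sub_zero] at slopeL
  rw [g11] at slopeR
  -- final algebra: contradiction
  have heq : 2 / (1 + a) * t₀ + 2 / (1 + r) * (1 - t₀) = 1 := by linarith
  have hkey : (1 - t₀) * (r - 1) ^ 2 = 0 := by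
    have ht₀ne : t₀ ≠ 0 := ne_of_gt ht₀0
    field_simp at heq
    nlinarith [heq, hat₀, sq_nonneg (r - 1)]
  have : r - 1 = 0 := by
    rcases mul_eq_zero.mp hkey with h | h
    · linarith
    · exact pow_eq_zero_iff (by norm_num) |>.mp h
  exact hr1 (by linarith)
end

section
/- Let t₀>0, v∈(0,1), t_n = vⁿ t₀, and let h satisfy h(t_n) = (−1)ⁿ h(t₀) + 2t₀ Σ_{k=1}^{n} (−1)^{n−k} v^k for all n ≥ 0. Then for every even n ≥ 0: h(t_n) − h(t_{n+1}) = 2h(t₀) − 4t₀v/(1+v) + 2t₀·((1−v)/(1+v))·v^{n+1}, and for every odd n ≥ 1: h(t_n) − h(t_{n+1}) = −2h(t₀) + 4t₀v/(1+v) + 2t₀·((1−v)/(1+v))·v^{n+1}. -/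
lemma orbit_sum_closed (v : ℝ) : ∀ n : ℕ,
    (1 + v) * ∑ k ∈ Finset.Icc 1 n, (-1 : ℝ) ^ (n - k) * v ^ k
      = v ^ (n + 1) - (-1 : ℝ) ^ n * v := by
  intro n
  induction n with
  | zero => simp
  | succ n ih =>
    rw [Finset.sum_Icc_succ_top (by omega : 1 ≤ n + 1)]
    have hs : ∑ k ∈ Finset.Icc 1 n, (-1 : ℝ) ^ (n + 1 - k) * v ^ k
        = -∑ k ∈ Finset.Icc 1 n, (-1 : ℝ) ^ (n - k) * v ^ k := by
      rw [← Finset.sum_neg_distrib]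
      refine Finset.sum_congr rfl fun k hk => ?_
      have hk' : k ≤ n := (Finset.mem_Icc.mp hk).2
      have : n + 1 - k = (n - k) + 1 := by omega
      rw [this, pow_succ]; ring
    rw [hs, Nat.sub_self]
    linear_combination -ih
  
/-- With `t₀ > 0`, `v ∈ (0,1)`, `t n = vⁿ t₀`, and `h` satisfying the
closed form `h (t n) = (−1)ⁿ h(t₀) + 2t₀ Σ_{k=1}^{n} (−1)^{n−k} v^k`, the consecutive
differences along the orbit satisfy: for even `n`,
`h(t n) − h(t (n+1)) = 2h(t₀) − 4t₀v/(1+v) + 2t₀((1−v)/(1+v))v^{n+1}`, and for odd `n`,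
`h(t n) − h(t (n+1)) = −2h(t₀) + 4t₀v/(1+v) + 2t₀((1−v)/(1+v))v^{n+1}`. -/
theorem orbit_differences (t₀ v : ℝ) (ht₀ : 0 < t₀) (hv : v ∈ Set.Ioo (0 : ℝ) 1) (h : ℝ → ℝ)
    (hform : ∀ n : ℕ, h (v ^ n * t₀) =
      (-1 : ℝ) ^ n * h t₀ + 2 * t₀ * ∑ k ∈ Finset.Icc 1 n, (-1 : ℝ) ^ (n - k) * v ^ k) :
    (∀ n : ℕ, Even n →
        h (v ^ n * t₀) - h (v ^ (n + 1) * t₀) =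
          2 * h t₀ - 4 * t₀ * v / (1 + v) + 2 * t₀ * ((1 - v) / (1 + v)) * v ^ (n + 1)) ∧
    (∀ n : ℕ, Odd n →
        h (v ^ n * t₀) - h (v ^ (n + 1) * t₀) =
          -(2 * h t₀) + 4 * t₀ * v / (1 + v) + 2 * t₀ * ((1 - v) / (1 + v)) * v ^ (n + 1)) := by
  have hv1 : (1 : ℝ) + v ≠ 0 := by nlinarith [hv.1]
  constructor
  · intro n hn
    have h1 := orbit_sum_closed v n
    have h2 := orbit_sum_closed v (n + 1)
    have hp : (-1 : ℝ) ^ n = 1 := hn.neg_one_pow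
    have hp' : (-1 : ℝ) ^ (n + 1) = -1 := by rw [pow_succ, hp]; ring
    rw [hform n, hform (n + 1)]
    simp only [hp, hp'] at h1 h2 ⊢
    field_simp
    linear_combination 2 * t₀ * h1 - 2 * t₀ * h2
  · intro n hn
    have h1 := orbit_sum_closed v n
    have h2 := orbit_sum_closed v (n + 1)
    have hp : (-1 : ℝ) ^ n = -1 := hn.neg_one_pow
    have hp' : (-1 : ℝ) ^ (n + 1) = 1 := by rw [pow_succ, hp]; ring
    rw [hform n, hform (n + 1)]
    simp only [hp, hp'] at h1 h2 ⊢
    field_simp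
    linear_combination 2 * t₀ * h1 - 2 * t₀ * h2
end

section
/- Let t₀>0, v∈(0,1), t_n = vⁿ t₀, and let h satisfy h(t_n) = (−1)ⁿ h(t₀) + 2t₀ Σ_{k=1}^{n} (−1)^{n−k} v^k for all n ≥ 0. If h(t_n) − h(t_{n+1}) → 0 as n → ∞ (in particular, if h extends to a function continuous at 0), then necessarily h(t₀) = 2t₀v/(1+v). -/
open Filter
open scoped Topology

lemma sumS_closed (v : ℝ) (hv : (1 : ℝ) + v ≠ 0) (n : ℕ) :
    ∑ k ∈ Finset.Icc 1 n, (-1 : ℝ) ^ (n - k) * v ^ k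
      = ((-1 : ℝ) ^ (n + 1) * v + v ^ (n + 1)) / (1 + v) := by
  induction n with
  | zero => simp
  | succ n ih =>
    rw [Finset.sum_Icc_succ_top (by omega : 1 ≤ n + 1)]
    have hstep : ∑ k ∈ Finset.Icc 1 n, (-1 : ℝ) ^ (n + 1 - k) * v ^ k
        = ∑ k ∈ Finset.Icc 1 n, -((-1 : ℝ) ^ (n - k) * v ^ k) := by
      apply Finset.sum_congr rfl
      intro k hk
      have hk' : k ≤ n := (Finset.mem_Icc.mp hk).2
      have hnk : n + 1 - k = (n - k) + 1 := by omega
      rw [hnk, pow_succ]; ring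
    rw [hstep, Finset.sum_neg_distrib, ih]
    simp only [Nat.sub_self, pow_zero, one_mul]
    field_simp
    ring

/-- With `t₀ > 0`, `v ∈ (0,1)`, `t n = vⁿ t₀`, and `h` satisfying the
closed form `h (t n) = (−1)ⁿ h(t₀) + 2t₀ Σ_{k=1}^{n} (−1)^{n−k} v^k`, if
`h(t n) − h(t (n+1)) → 0` as `n → ∞`, then necessarily `h(t₀) = 2t₀v/(1+v)`. -/
theorem limit_forces_value (t₀ v : ℝ) (ht₀ : 0 < t₀) (hv : v ∈ Set.Ioo (0 : ℝ) 1) (h : ℝ → ℝ)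
    (hform : ∀ n : ℕ, h (v ^ n * t₀) =
      (-1 : ℝ) ^ n * h t₀ + 2 * t₀ * ∑ k ∈ Finset.Icc 1 n, (-1 : ℝ) ^ (n - k) * v ^ k)
    (hlim : Tendsto (fun n : ℕ => h (v ^ n * t₀) - h (v ^ (n + 1) * t₀)) atTop (𝓝 0)) :
    h t₀ = 2 * t₀ * v / (1 + v) := by
  obtain ⟨hv0, hv1⟩ := hv
  have hvne : (1 : ℝ) + v ≠ 0 := by linarith
  set c : ℝ := 2 * h t₀ - 4 * t₀ * v / (1 + v) with hc_def
  -- explicit formula for the difference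
  have hdiff : ∀ n : ℕ, h (v ^ n * t₀) - h (v ^ (n + 1) * t₀)
      = (-1 : ℝ) ^ n * c + (4 * t₀ / (1 + v) - 2 * t₀) * v ^ (n + 1) := by
    intro n
    rw [hform n, hform (n + 1), sumS_closed v hvne n, sumS_closed v hvne (n + 1)]
    simp only [hc_def, pow_succ]
    field_simp
    ring
  -- the error term tends to 0
  have he : Tendsto (fun n : ℕ => (4 * t₀ / (1 + v) - 2 * t₀) * v ^ (n + 1)) atTop (𝓝 0) := by
    have hp : Tendsto (fun n : ℕ => v ^ n) atTop (𝓝 0) :=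
      tendsto_pow_atTop_nhds_zero_of_lt_one hv0.le hv1
    have hp1 : Tendsto (fun n : ℕ => v ^ (n + 1)) atTop (𝓝 0) :=
      hp.comp (tendsto_add_atTop_nat 1)
    simpa using hp1.const_mul (4 * t₀ / (1 + v) - 2 * t₀)
  -- hence (-1)^n * c → 0
  have hc : Tendsto (fun n : ℕ => (-1 : ℝ) ^ n * c) atTop (𝓝 0) := by
    have : (fun n : ℕ => (-1 : ℝ) ^ n * c)
        = fun n : ℕ => (h (v ^ n * t₀) - h (v ^ (n + 1) * t₀))
          - (4 * t₀ / (1 + v) - 2 * t₀) * v ^ (n + 1) := by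
      funext n; rw [hdiff n]; ring
    rw [this]
    simpa using hlim.sub he
  -- along even indices
  have h2 : Tendsto (fun n : ℕ => 2 * n) atTop atTop :=
    tendsto_atTop_atTop.mpr fun b => ⟨b, fun a ha => by omega⟩
  have hceven : Tendsto (fun _ : ℕ => c) atTop (𝓝 0) := by
    have := hc.comp h2
    simp only [Function.comp_def, pow_mul, neg_one_sq, one_pow, one_mul] at this
    exact this
  have hc0 : c = 0 := tendsto_nhds_unique tendsto_const_nhds hceven
  have : 2 * h t₀ = 4 * t₀ * v / (1 + v) := by
    have := hc0; rw [hc_def] at this; linarith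
  field_simp at this ⊢
  linarith
end
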